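/- Let D ⊆ 2^{<ω} be a prefix-free set of nonempty binary strings with Σ_{σ∈D} 2^{-|σ|} = 1, and define the tree-shift T_D : 2^ω → 2^ω by T_D(σ⌢Y) = Y whenever σ ∈ D (well-defined since D is prefix-free), and T_D(X) = X when no initial segment of X belongs to D. Then T_D is measure-preserving with respect to the uniform measure λ and is ergodic with respect to λ. -/

import Mathlib

open Filter MeasureTheory

/-- The length-`n` initial segment of `X ∈ 2^ω`, as a finite binary string. -/
def seg (X : ℕ → Bool) (n : ℕ) : List Bool := (List.range n).map X

/-- The cylinder `⟦σ⟧` of all sequences extending the string `σ`. -/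
def cyl (σ : List Bool) : Set (ℕ → Bool) := {X | seg X σ.length = σ}

/-- `D ⊆ 2^{<ω}` is prefix-free: no element is a proper initial segment of another. -/
def PrefixFree (D : Set (List Bool)) : Prop :=
  ∀ σ ∈ D, ∀ τ ∈ D, σ <+: τ → σ = τ

open scoped Classical in
/-- The tree-shift `T_D`: if some initial segment of `X` lies in `D` (for
prefix-free `D` it is unique), remove it; otherwise leave `X` unchanged.
So `T_D (σ⌢Y) = Y` for `σ ∈ D`. -/
noncomputable def treeShift (D : Set (List Bool)) (X : ℕ → Bool) : ℕ → Bool :=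
  if h : ∃ n, seg X n ∈ D then (fun i => X (Nat.find h + i)) else X

open scoped Classical

/-! ### Basic lemmas on `seg` and `cyl` -/

@[simp] lemma seg_length (X : ℕ → Bool) (n : ℕ) : (seg X n).length = n := by simp [seg]

lemma seg_getElem (X : ℕ → Bool) {n i : ℕ} (h : i < n) :
    (seg X n)[i]'(by simpa using h) = X i := by simp [seg]

lemma seg_add (X : ℕ → Bool) (m k : ℕ) :
    seg X (m + k) = seg X m ++ seg (fun i => X (m + i)) k := by
  simp [seg, List.range_add, Function.comp]

lemma mem_cyl {σ : List Bool} {X : ℕ → Bool} : X ∈ cyl σ ↔ seg X σ.length = σ := Iff.rfl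

lemma mem_cyl_seg (X : ℕ → Bool) (n : ℕ) : X ∈ cyl (seg X n) := by simp [mem_cyl]

lemma seg_prefix (X : ℕ → Bool) {m n : ℕ} (h : m ≤ n) : seg X m <+: seg X n := by
  obtain ⟨k, rfl⟩ := Nat.exists_eq_add_of_le h
  exact ⟨_, (seg_add X m k).symm⟩

lemma cyl_append {w τ : List Bool} {X : ℕ → Bool} :
    X ∈ cyl (w ++ τ) ↔ X ∈ cyl w ∧ (fun i => X (w.length + i)) ∈ cyl τ := by
  simp only [mem_cyl, List.length_append, seg_add]
  constructor
  · intro h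
    have := List.append_inj h (by simp)
    exact ⟨this.1, this.2⟩
  · rintro ⟨h1, h2⟩; rw [h1, h2]

lemma cyl_mono {τ w : List Bool} (h : τ <+: w) : cyl w ⊆ cyl τ := by
  intro X hX
  obtain ⟨r, rfl⟩ := h
  exact (cyl_append.mp hX).1

lemma prefix_of_mem_cyl {σ τ : List Bool} {X : ℕ → Bool} (hσ : X ∈ cyl σ) (hτ : X ∈ cyl τ)
    (h : σ.length ≤ τ.length) : σ <+: τ := by
  rw [mem_cyl] at hσ hτ
  calc σ = seg X σ.length := hσ.symm
  _ <+: seg X τ.length := seg_prefix X h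
  _ = τ := hτ

/-! ### Measurability and generation -/

lemma cyl_eq_iInter (σ : List Bool) :
    cyl σ = ⋂ (i : ℕ) (_ : i < σ.length), {X : ℕ → Bool | X i = σ.getD i false} := by
  ext X
  simp only [Set.mem_iInter, Set.mem_setOf_eq, mem_cyl]
  constructor
  · intro h i hi
    rw [← h, List.getD_eq_getElem _ _ (by simpa using hi), seg_getElem X hi]
  · intro h
    apply List.ext_getElem (by simp)
    intro i h1 h2
    rw [seg_getElem X (by simpa using h1), ← List.getD_eq_getElem _ false h2]
    exact h i h2

lemma measurableSet_cyl (σ : List Bool) : MeasurableSet (cyl σ) := by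
  rw [cyl_eq_iInter]
  exact MeasurableSet.iInter fun i => MeasurableSet.iInter fun _ =>
    (measurable_pi_apply i) (measurableSet_singleton _)

lemma gen_cyl : (inferInstance : MeasurableSpace (ℕ → Bool)) =
    MeasurableSpace.generateFrom (Set.range cyl) := by
  apply le_antisymm
  · rw [show (inferInstance : MeasurableSpace (ℕ → Bool)) = MeasurableSpace.pi from rfl,
      MeasurableSpace.pi]
    refine iSup_le fun i => ?_
    rw [MeasurableSpace.comap_le_iff_le_map]
    intro s _
    have : (fun X : ℕ → Bool => X i) ⁻¹' s =
        ⋃ (σ : List Bool) (_ : σ.length = i + 1 ∧ σ.getD i false ∈ s), cyl σ := by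
      ext X
      simp only [Set.mem_preimage, Set.mem_iUnion]
      constructor
      · intro h
        refine ⟨seg X (i+1), ⟨by simp, ?_⟩, mem_cyl_seg X (i+1)⟩
        rwa [List.getD_eq_getElem _ _ (by simp), seg_getElem X (by omega)]
      · rintro ⟨σ, ⟨hlen, hs⟩, hX⟩
        rw [mem_cyl] at hX
        have : X i = σ.getD i false := by
          rw [← hX, List.getD_eq_getElem _ _ (by simp [hlen]), seg_getElem X (by omega)]
        rwa [this]
    rw [MeasurableSpace.map_def, this]
    exact MeasurableSet.iUnion fun σ => MeasurableSet.iUnion fun _ =>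
      MeasurableSpace.measurableSet_generateFrom ⟨σ, rfl⟩
  · exact MeasurableSpace.generateFrom_le (by rintro s ⟨σ, rfl⟩; exact measurableSet_cyl σ)

lemma isPiSystem_cyl : IsPiSystem (Set.range cyl) := by
  rintro s ⟨σ, rfl⟩ t ⟨τ, rfl⟩ ⟨X, hX1, hX2⟩
  rcases le_total σ.length τ.length with h | h
  · rw [Set.inter_eq_self_of_subset_right (cyl_mono (prefix_of_mem_cyl hX1 hX2 h))]
    exact ⟨τ, rfl⟩
  · rw [Set.inter_eq_self_of_subset_left (cyl_mono (prefix_of_mem_cyl hX2 hX1 h))]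
    exact ⟨σ, rfl⟩

/-! ### The shift maps -/

/-- the `n`-fold shift -/
def shf (n : ℕ) (X : ℕ → Bool) : ℕ → Bool := fun i => X (n + i)

lemma measurable_shf (n : ℕ) : Measurable (shf n) :=
  measurable_pi_lambda _ fun i => measurable_pi_apply (n + i)

@[simp] lemma shf_zero (X : ℕ → Bool) : shf 0 X = X := by funext i; simp [shf]

lemma shf_shf (m n : ℕ) (X : ℕ → Bool) : shf n (shf m X) = shf (m + n) X := by
  funext i; simp [shf, Nat.add_assoc]

lemma cyl_append' {w τ : List Bool} :
    cyl (w ++ τ) = cyl w ∩ shf w.length ⁻¹' cyl τ := by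
  ext X; exact cyl_append

/-! ### Measure lemmas -/

lemma meas_inter_conull {α} [MeasurableSpace α] {μ : Measure α} {U : Set α}
    (h : μ Uᶜ = 0) (s : Set α) : μ (s ∩ U) = μ s := by
  refine le_antisymm (measure_mono Set.inter_subset_left) ?_
  calc μ s = μ ((s ∩ U) ∪ (s ∩ Uᶜ)) := by rw [Set.inter_union_compl]
  _ ≤ μ (s ∩ U) + μ (s ∩ Uᶜ) := measure_union_le _ _
  _ ≤ μ (s ∩ U) + μ Uᶜ := add_le_add le_rfl (measure_mono Set.inter_subset_right)
  _ = μ (s ∩ U) := by rw [h, add_zero]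

lemma disj_on (P : Set (List Bool)) (hP : PrefixFree P) :
    Pairwise (Function.onFun Disjoint fun σ : P => cyl (σ : List Bool)) := by
  rintro ⟨σ, hσ⟩ ⟨τ, hτ⟩ hne
  refine Set.disjoint_left.mpr fun X h1 h2 => hne ?_
  rcases le_total σ.length τ.length with h | h
  · exact Subtype.ext (hP σ hσ τ hτ (prefix_of_mem_cyl h1 h2 h))
  · exact Subtype.ext ((hP τ hτ σ hσ (prefix_of_mem_cyl h2 h1 h)).symm)

section Lam

variable (lam : Measure (ℕ → Bool)) [IsProbabilityMeasure lam]
  (hlam : ∀ σ : List Bool, lam (cyl σ) = (1 / 2 : ENNReal) ^ σ.length)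

include hlam

lemma lam_iUnion_cyl (P : Set (List Bool)) (hP : PrefixFree P) :
    lam (⋃ σ : P, cyl (σ : List Bool)) = ∑' σ : P, (1 / 2 : ENNReal) ^ (σ : List Bool).length := by
  rw [measure_iUnion (disj_on P hP) (fun σ => measurableSet_cyl _)]
  simp only [hlam]

/-- The key scaling property: on the cylinder `cyl w`, pulling back a set along
the shift by `w.length` scales its measure by `2^{-|w|}`. -/
lemma lam_scale (w : List Bool) {S : Set (ℕ → Bool)} (hS : MeasurableSet S) :
    lam (cyl w ∩ shf w.length ⁻¹' S) = (1 / 2 : ENNReal) ^ w.length * lam S := by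
  set μ₁ : Measure (ℕ → Bool) := (lam.restrict (cyl w)).map (shf w.length) with hμ₁
  have key : ∀ {S : Set (ℕ → Bool)}, MeasurableSet S →
      μ₁ S = lam (cyl w ∩ shf w.length ⁻¹' S) := by
    intro S hS
    rw [hμ₁, Measure.map_apply (measurable_shf _) hS,
      Measure.restrict_apply ((measurable_shf _) hS), Set.inter_comm]
  have : μ₁ = ((1 / 2 : ENNReal) ^ w.length) • lam := by
    refine ext_of_generate_finite (Set.range cyl) gen_cyl isPiSystem_cyl ?_ ?_
    · rintro s ⟨τ, rfl⟩
      rw [key (measurableSet_cyl τ), ← cyl_append', hlam, Measure.smul_apply, hlam,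
        smul_eq_mul, List.length_append, pow_add]
    · rw [key MeasurableSet.univ]
      simp [hlam w]
  rw [← key hS, this, Measure.smul_apply, smul_eq_mul]

end Lam

lemma hsum_ennreal {D : Set (List Bool)}
    (hsum : ∑' σ : D, ((1 : ℝ) / 2) ^ (σ : List Bool).length = 1) :
    ∑' σ : D, ((1 : ENNReal) / 2) ^ (σ : List Bool).length = 1 := by
  have hhalf : ENNReal.ofReal ((1 : ℝ)/2) = 1/2 := by
    rw [ENNReal.ofReal_div_of_pos (by norm_num)]; norm_num
  have hs : Summable (fun σ : D => ((1 : ℝ) / 2) ^ (σ : List Bool).length) := by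
    by_contra h
    rw [tsum_eq_zero_of_not_summable h] at hsum
    norm_num at hsum
  calc ∑' σ : D, ((1 : ENNReal) / 2) ^ (σ : List Bool).length
      = ∑' σ : D, ENNReal.ofReal (((1 : ℝ) / 2) ^ (σ : List Bool).length) := by
        refine tsum_congr fun σ => ?_
        rw [ENNReal.ofReal_pow (by norm_num), hhalf]
    _ = ENNReal.ofReal (∑' σ : D, ((1 : ℝ) / 2) ^ (σ : List Bool).length) :=
        (ENNReal.ofReal_tsum_of_nonneg (fun _ => by positivity) hs).symm
    _ = 1 := by rw [hsum, ENNReal.ofReal_one]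

/-! ### The tree shift on cylinders -/

lemma treeShift_eq_shf {D : Set (List Bool)} (hpf : PrefixFree D) {σ : List Bool} (hσ : σ ∈ D)
    {X : ℕ → Bool} (hX : X ∈ cyl σ) : treeShift D X = shf σ.length X := by
  have hseg : seg X σ.length = σ := mem_cyl.mp hX
  have h : ∃ n, seg X n ∈ D := ⟨σ.length, by rwa [hseg]⟩
  have hfind : Nat.find h = σ.length := by
    have h1 : Nat.find h ≤ σ.length := Nat.find_le (by rwa [hseg])
    have h2 : seg X (Nat.find h) ∈ D := Nat.find_spec h
    have h3 : seg X (Nat.find h) <+: σ := by rw [← hseg]; exact seg_prefix X h1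
    have h4 := hpf _ h2 σ hσ h3
    have := congrArg List.length h4
    simpa using this
  unfold treeShift
  rw [dif_pos h, hfind]
  rfl

lemma measurableSet_segD (D : Set (List Bool)) (m : ℕ) :
    MeasurableSet {X : ℕ → Bool | seg X m ∈ D} := by
  have : {X : ℕ → Bool | seg X m ∈ D} =
      ⋃ (σ : D) (_ : (σ : List Bool).length = m), cyl (σ : List Bool) := by
    ext X
    simp only [Set.mem_iUnion, Set.mem_setOf_eq]
    constructor
    · intro h; exact ⟨⟨seg X m, h⟩, by simp, mem_cyl_seg X m⟩
    · rintro ⟨⟨σ, hσ⟩, hlen, hX⟩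
      have := mem_cyl.mp hX
      simp only at hlen this
      rw [hlen] at this
      rwa [this]
  rw [this]
  exact MeasurableSet.iUnion fun σ => MeasurableSet.iUnion fun _ => measurableSet_cyl _

lemma measurable_treeShift (D : Set (List Bool)) : Measurable (treeShift D) := by
  intro s hs
  have hpre : treeShift D ⁻¹' s =
      ({X : ℕ → Bool | ∃ n, seg X n ∈ D}ᶜ ∩ s) ∪
        ⋃ n, ({X : ℕ → Bool | seg X n ∈ D ∧ ∀ m < n, seg X m ∉ D} ∩ shf n ⁻¹' s) := by
    ext X
    simp only [Set.mem_preimage, Set.mem_union, Set.mem_inter_iff, Set.mem_compl_iff,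
      Set.mem_setOf_eq, Set.mem_iUnion]
    unfold treeShift
    by_cases h : ∃ n, seg X n ∈ D
    · rw [dif_pos h]
      constructor
      · intro hmem
        exact Or.inr ⟨Nat.find h, ⟨Nat.find_spec h, fun m hm => Nat.find_min h hm⟩, hmem⟩
      · rintro (⟨hc, _⟩ | ⟨n, ⟨hn1, hn2⟩, hn3⟩)
        · exact absurd h hc
        · have : n = Nat.find h := by
            refine le_antisymm ?_ (Nat.find_le hn1)
            by_contra hlt
            exact hn2 _ (by omega) (Nat.find_spec h)
          rwa [← this]
    · rw [dif_neg h]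
      constructor
      · intro hmem; exact Or.inl ⟨h, hmem⟩
      · rintro (⟨_, h2⟩ | ⟨n, ⟨hn1, _⟩, _⟩)
        · exact h2
        · exact absurd ⟨n, hn1⟩ h
  rw [hpre]
  have hE : MeasurableSet {X : ℕ → Bool | ∃ n, seg X n ∈ D} := by
    have : {X : ℕ → Bool | ∃ n, seg X n ∈ D} = ⋃ n, {X : ℕ → Bool | seg X n ∈ D} := by
      ext X; simp
    rw [this]
    exact MeasurableSet.iUnion fun n => measurableSet_segD D n
  refine (hE.compl.inter hs).union (MeasurableSet.iUnion fun n => MeasurableSet.inter ?_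
    ((measurable_shf n) hs))
  have : {X : ℕ → Bool | seg X n ∈ D ∧ ∀ m < n, seg X m ∉ D} =
      {X : ℕ → Bool | seg X n ∈ D} ∩ ⋂ (m : ℕ) (_ : m < n), {X : ℕ → Bool | seg X m ∈ D}ᶜ := by
    ext X; simp [Set.mem_iInter]
  rw [this]
  exact (measurableSet_segD D n).inter
    (MeasurableSet.iInter fun m => MeasurableSet.iInter fun _ => (measurableSet_segD D m).compl)

/-! ### Words over `D` -/

/-- `n`-fold concatenations of elements of `D`. -/
def Dword (D : Set (List Bool)) : ℕ → Set (List Bool)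
  | 0 => {[]}
  | n + 1 => {u | ∃ σ ∈ D, ∃ w ∈ Dword D n, u = σ ++ w}

lemma prefixFree_Dword {D : Set (List Bool)} (hpf : PrefixFree D) (n : ℕ) :
    PrefixFree (Dword D n) := by
  induction n with
  | zero =>
    rintro σ hσ τ hτ _
    simp only [Dword, Set.mem_singleton_iff] at hσ hτ
    rw [hσ, hτ]
  | succ n ih =>
    rintro u hu u' hu' hpre
    obtain ⟨σ, hσ, w, hw, rfl⟩ := hu
    obtain ⟨σ', hσ', w', hw', rfl⟩ := hu'
    have hσσ' : σ = σ' := by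
      have h1 : σ <+: σ' ++ w' := (List.prefix_append σ w).trans hpre
      have h2 : σ' <+: σ' ++ w' := List.prefix_append σ' w'
      rcases List.prefix_or_prefix_of_prefix h1 h2 with h | h
      · exact hpf σ hσ σ' hσ' h
      · exact (hpf σ' hσ' σ hσ h).symm
    subst hσσ'
    have := ih w hw w' hw' ((List.prefix_append_right_inj σ).mp hpre)
    rw [this]

lemma mem_Dword_succ {D : Set (List Bool)} {n : ℕ} {u : List Bool} :
    u ∈ Dword D (n + 1) ↔ ∃ σ ∈ D, ∃ w ∈ Dword D n, u = σ ++ w := Iff.rfl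

lemma iterate_treeShift_eq_shf {D : Set (List Bool)} (hpf : PrefixFree D) :
    ∀ (n : ℕ) (w : List Bool), w ∈ Dword D n → ∀ X ∈ cyl w,
      (treeShift D)^[n] X = shf w.length X := by
  intro n
  induction n with
  | zero =>
    rintro w hw X _
    simp only [Dword, Set.mem_singleton_iff] at hw
    subst hw
    simp
  | succ n ih =>
    rintro u hu X hX
    obtain ⟨σ, hσ, w, hw, rfl⟩ := hu
    rw [cyl_append'] at hX
    have h1 : treeShift D X = shf σ.length X := treeShift_eq_shf hpf hσ hX.1
    rw [Function.iterate_succ_apply, h1, ih w hw _ hX.2, shf_shf, List.length_append]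

lemma length_Dword {D : Set (List Bool)} (hne : ∀ σ ∈ D, σ ≠ ([] : List Bool)) :
    ∀ (n : ℕ) (w : List Bool), w ∈ Dword D n → n ≤ w.length := by
  intro n
  induction n with
  | zero => intro w _; omega
  | succ n ih =>
    rintro u ⟨σ, hσ, w, hw, rfl⟩
    have h1 : 1 ≤ σ.length := List.length_pos_iff.mpr (hne σ hσ)
    have := ih w hw
    simp only [List.length_append]
    omega

section Main

variable {D : Set (List Bool)}
  (lam : Measure (ℕ → Bool)) [IsProbabilityMeasure lam]
  (hlam : ∀ σ : List Bool, lam (cyl σ) = (1 / 2 : ENNReal) ^ σ.length)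
  (hne : ∀ σ ∈ D, σ ≠ ([] : List Bool))
  (hpf : PrefixFree D)
  (hsumE : ∑' σ : D, ((1 : ENNReal) / 2) ^ (σ : List Bool).length = 1)

include hlam hpf hsumE

lemma lam_Uword (n : ℕ) (hneD : ∀ σ ∈ D, σ ≠ ([] : List Bool)) :
    lam (⋃ w : Dword D n, cyl (w : List Bool)) = 1 := by
  clear hneD
  induction n with
  | zero =>
    have : (⋃ w : Dword D 0, cyl (w : List Bool)) = Set.univ := by
      refine Set.eq_univ_of_forall fun X => Set.mem_iUnion.mpr ?_
      refine ⟨⟨[], rfl⟩, ?_⟩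
      simp [mem_cyl, seg]
    rw [this]
    exact measure_univ
  | succ n ih =>
    have hUm : MeasurableSet (⋃ w : Dword D n, cyl (w : List Bool)) :=
      MeasurableSet.iUnion fun w => measurableSet_cyl _
    have hsplit : (⋃ u : Dword D (n + 1), cyl (u : List Bool)) =
        ⋃ σ : D, (cyl (σ : List Bool) ∩
          shf (σ : List Bool).length ⁻¹' (⋃ w : Dword D n, cyl (w : List Bool))) := by
      ext X
      simp only [Set.mem_iUnion, Set.mem_inter_iff, Set.mem_preimage]
      constructor
      · rintro ⟨⟨u, σ, hσ, w, hw, rfl⟩, hX⟩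
        rw [cyl_append'] at hX
        exact ⟨⟨σ, hσ⟩, hX.1, ⟨⟨w, hw⟩, hX.2⟩⟩
      · rintro ⟨⟨σ, hσ⟩, hXσ, hXU⟩
        obtain ⟨⟨w, hw⟩, hXw⟩ := hXU
        exact ⟨⟨σ ++ w, ⟨σ, hσ, w, hw, rfl⟩⟩, cyl_append'.symm ▸ ⟨hXσ, hXw⟩⟩
    rw [hsplit, measure_iUnion
      (fun i j hij => ((disj_on D hpf) hij).mono Set.inter_subset_left Set.inter_subset_left)
      (fun σ => (measurableSet_cyl _).inter ((measurable_shf _) hUm))]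
    calc ∑' σ : D, lam (cyl (σ : List Bool) ∩
          shf (σ : List Bool).length ⁻¹' (⋃ w : Dword D n, cyl (w : List Bool)))
        = ∑' σ : D, (1 / 2 : ENNReal) ^ (σ : List Bool).length := by
          refine tsum_congr fun σ => ?_
          rw [lam_scale lam hlam _ hUm, ih, mul_one]
      _ = 1 := hsumE

theorem mp_treeShift : MeasurePreserving (treeShift D) lam lam := by
  refine ⟨measurable_treeShift D, ?_⟩
  refine Measure.ext fun s hs => ?_
  rw [Measure.map_apply (measurable_treeShift D) hs]
  have hU : lam (⋃ σ : D, cyl (σ : List Bool)) = 1 := by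
    rw [lam_iUnion_cyl lam hlam D hpf]; exact hsumE
  have hUm : MeasurableSet (⋃ σ : D, cyl (σ : List Bool)) :=
    MeasurableSet.iUnion fun σ => measurableSet_cyl _
  have hUc : lam (⋃ σ : D, cyl (σ : List Bool))ᶜ = 0 :=
    (prob_compl_eq_zero_iff hUm).mpr hU
  rw [← meas_inter_conull hUc (treeShift D ⁻¹' s)]
  have hsplit : treeShift D ⁻¹' s ∩ (⋃ σ : D, cyl (σ : List Bool)) =
      ⋃ σ : D, (cyl (σ : List Bool) ∩ shf (σ : List Bool).length ⁻¹' s) := by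
    ext X
    simp only [Set.mem_inter_iff, Set.mem_preimage, Set.mem_iUnion]
    constructor
    · rintro ⟨hXs, ⟨σ, hσ⟩, hXσ⟩
      refine ⟨⟨σ, hσ⟩, hXσ, ?_⟩
      rwa [← treeShift_eq_shf hpf hσ hXσ]
    · rintro ⟨⟨σ, hσ⟩, hXσ, hXs⟩
      exact ⟨by rw [treeShift_eq_shf hpf hσ hXσ]; exact hXs, ⟨σ, hσ⟩, hXσ⟩
  rw [hsplit, measure_iUnion
    (fun i j hij => ((disj_on D hpf) hij).mono Set.inter_subset_left Set.inter_subset_left)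
    (fun σ => (measurableSet_cyl _).inter ((measurable_shf _) hs))]
  calc ∑' σ : D, lam (cyl (σ : List Bool) ∩ shf (σ : List Bool).length ⁻¹' s)
      = ∑' σ : D, (1 / 2 : ENNReal) ^ (σ : List Bool).length * lam s := by
        exact tsum_congr fun σ => lam_scale lam hlam _ hs
    _ = (∑' σ : D, (1 / 2 : ENNReal) ^ (σ : List Bool).length) * lam s :=
        ENNReal.tsum_mul_right
    _ = lam s := by rw [hsumE, one_mul]

include hne in
lemma lam_inter_of_invariant {A : Set (ℕ → Bool)} (hA : MeasurableSet A)
    (hinv : treeShift D ⁻¹' A = A) :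
    ∀ B : Set (ℕ → Bool), MeasurableSet B → lam (B ∩ A) = lam B * lam A := by
  have hiter : ∀ n, (treeShift D)^[n] ⁻¹' A = A := by
    intro n
    induction n with
    | zero => simp
    | succ n ih => rw [Function.iterate_succ, Set.preimage_comp, ih, hinv]
  have hcyl : ∀ τ : List Bool, lam (cyl τ ∩ A) = lam (cyl τ) * lam A := by
    intro τ
    set n := τ.length with hn
    set U : Set (ℕ → Bool) := ⋃ w : Dword D n, cyl (w : List Bool) with hU
    have hUm : MeasurableSet U := MeasurableSet.iUnion fun w => measurableSet_cyl _
    have hU1 : lam U = 1 := lam_Uword lam hlam hpf hsumE n hne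
    have hUc : lam Uᶜ = 0 := (prob_compl_eq_zero_iff hUm).mpr hU1
    set Q : Set (List Bool) := {w ∈ Dword D n | τ <+: w} with hQ
    have hQpf : PrefixFree Q := fun σ hσ τ' hτ' h =>
      prefixFree_Dword hpf n σ hσ.1 τ' hτ'.1 h
    have hQsub : (⋃ w : Q, cyl (w : List Bool)) = cyl τ ∩ U := by
      ext X
      simp only [Set.mem_iUnion, Set.mem_inter_iff, hU]
      constructor
      · rintro ⟨⟨w, hw, hpre⟩, hX⟩
        exact ⟨cyl_mono hpre hX, ⟨⟨w, hw⟩, hX⟩⟩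
      · rintro ⟨hτX, hXU⟩
        obtain ⟨⟨w, hw⟩, hXw⟩ := hXU
        have hlen : τ.length ≤ w.length := hn ▸ length_Dword hne n w hw
        exact ⟨⟨w, ⟨hw, prefix_of_mem_cyl hτX hXw hlen⟩⟩, hXw⟩
    have hν : ∀ s : Set (ℕ → Bool), (lam.restrict A) s = lam (s ∩ A) :=
      fun s => Measure.restrict_apply' hA
    have hνUc : (lam.restrict A) Uᶜ = 0 := by
      rw [hν]
      exact le_antisymm (le_trans (measure_mono Set.inter_subset_left) hUc.le) zero_le
    calc lam (cyl τ ∩ A) = (lam.restrict A) (cyl τ) := (hν _).symm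
      _ = (lam.restrict A) (cyl τ ∩ U) := (meas_inter_conull hνUc _).symm
      _ = (lam.restrict A) (⋃ w : Q, cyl (w : List Bool)) := by rw [hQsub]
      _ = ∑' w : Q, (lam.restrict A) (cyl (w : List Bool)) :=
          measure_iUnion (disj_on Q hQpf) (fun w => measurableSet_cyl _)
      _ = ∑' w : Q, (1 / 2 : ENNReal) ^ (w : List Bool).length * lam A := by
          refine tsum_congr fun ⟨w, hw, hpre⟩ => ?_
          rw [hν]
          have hshift : cyl w ∩ A = cyl w ∩ shf w.length ⁻¹' A := by
            ext X
            simp only [Set.mem_inter_iff, Set.mem_preimage]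
            constructor
            · rintro ⟨hXw, hXA⟩
              refine ⟨hXw, ?_⟩
              rw [← iterate_treeShift_eq_shf hpf n w hw X hXw]
              rw [← hiter n] at hXA
              exact hXA
            · rintro ⟨hXw, hXA⟩
              refine ⟨hXw, ?_⟩
              rw [← hiter n, Set.mem_preimage, iterate_treeShift_eq_shf hpf n w hw X hXw]
              exact hXA
          rw [hshift, lam_scale lam hlam w hA]
      _ = (∑' w : Q, (1 / 2 : ENNReal) ^ (w : List Bool).length) * lam A :=
          ENNReal.tsum_mul_right
      _ = lam (⋃ w : Q, cyl (w : List Bool)) * lam A := by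
          rw [lam_iUnion_cyl lam hlam Q hQpf]
      _ = lam (cyl τ ∩ U) * lam A := by rw [hQsub]
      _ = lam (cyl τ) * lam A := by rw [meas_inter_conull hUc]
  intro B hB
  refine MeasurableSpace.induction_on_inter
    (C := fun B _ => lam (B ∩ A) = lam B * lam A) gen_cyl isPiSystem_cyl
    (by simp) ?_ ?_ ?_ B hB
  · rintro t ⟨τ, rfl⟩
    exact hcyl τ
  · intro t htm ht
    have h1 : lam (t ∩ A) + lam (tᶜ ∩ A) = lam A := by
      have := measure_inter_add_diff (μ := lam) A htm
      rw [Set.inter_comm A t] at this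
      rw [← this]
      congr 1
      rw [Set.diff_eq, Set.inter_comm]
    have h2 : lam (t ∩ A) + lam tᶜ * lam A = lam A := by
      rw [ht, ← add_mul]
      have h3 : lam t + lam tᶜ = 1 := by
        rw [measure_add_measure_compl htm, measure_univ]
      rw [h3, one_mul]
    have := h1.trans h2.symm
    exact (ENNReal.add_right_inj (measure_ne_top lam (t ∩ A))).mp this
  · intro f hdisj hmeas hC
    rw [Set.iUnion_inter, measure_iUnion
      (fun i j hij => (hdisj hij).mono Set.inter_subset_left Set.inter_subset_left)
      (fun i => (hmeas i).inter hA)]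
    calc ∑' i, lam (f i ∩ A) = ∑' i, lam (f i) * lam A := tsum_congr hC
      _ = (∑' i, lam (f i)) * lam A := ENNReal.tsum_mul_right
      _ = lam (⋃ i, f i) * lam A := by rw [measure_iUnion hdisj hmeas]

end Main

/-- For a prefix-free set `D` of nonempty strings with `Σ_{σ∈D} 2^{-|σ|} = 1`
and `λ` the uniform measure on `2^ω`, the tree-shift `T_D` is measure-preserving
and ergodic with respect to `λ`. -/
theorem stmt11 (D : Set (List Bool))
    (hne : ∀ σ ∈ D, σ ≠ ([] : List Bool))
    (hpf : PrefixFree D)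
    (hsum : ∑' σ : D, ((1 : ℝ) / 2) ^ (σ : List Bool).length = 1)
    (lam : Measure (ℕ → Bool)) [IsProbabilityMeasure lam]
    (hlam : ∀ σ : List Bool, lam (cyl σ) = (1 / 2 : ENNReal) ^ σ.length) :
    MeasurePreserving (treeShift D) lam lam ∧ Ergodic (treeShift D) lam := by
  have hsumE : ∑' σ : D, ((1 : ENNReal) / 2) ^ (σ : List Bool).length = 1 := hsum_ennreal hsum
  have hmp : MeasurePreserving (treeShift D) lam lam := mp_treeShift lam hlam hpf hsumE
  refine ⟨hmp, hmp, ⟨fun s hs hinv => ?_⟩⟩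
  rw [Filter.eventuallyConst_set']
  have := lam_inter_of_invariant lam hlam hne hpf hsumE hs hinv sᶜ hs.compl
  rw [Set.compl_inter_self] at this
  have h0 : lam sᶜ * lam s = 0 := by
    rw [← this, measure_empty]
  rcases mul_eq_zero.mp h0 with h | h
  · exact Or.inr (MeasureTheory.ae_eq_univ.mpr h)
  · exact Or.inl (MeasureTheory.ae_eq_empty.mpr h)
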